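/- Let u, v ∈ ℝ^d be unit vectors with θ(u,v) ≤ β for some β > 0, and let x ∈ ℝ^d be nonzero with |φ(x,u)| > β. Then ⟨u,x⟩·⟨v,x⟩ > 0 (in particular sgn(⟨u,x⟩) = sgn(⟨v,x⟩)), and |φ(x,v)| ≤ 2·|φ(x,u)|. -/

import Mathlib

open scoped RealInnerProductSpace
open Real InnerProductGeometry

variable {V : Type*} [NormedAddCommGroup V] [InnerProductSpace ℝ V]

lemma key_cs {y : V} (hy : ‖y‖ = 1) (x z : V) :
    |⟪x, z⟫ - ⟪x, y⟫ * ⟪y, z⟫| ≤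
      Real.sqrt (‖x‖ ^ 2 - ⟪x, y⟫ ^ 2) * Real.sqrt (‖z‖ ^ 2 - ⟪y, z⟫ ^ 2) := by
  have hyy : ⟪y, y⟫ = (1 : ℝ) := by
    rw [real_inner_self_eq_norm_sq, hy]; norm_num
  have hc1 : ⟪y, x⟫ = ⟪x, y⟫ := (real_inner_comm y x).symm
  have hc2 : ⟪z, y⟫ = ⟪y, z⟫ := (real_inner_comm z y).symm
  have h1 : ⟪x - ⟪x, y⟫ • y, z - ⟪y, z⟫ • y⟫ = ⟪x, z⟫ - ⟪x, y⟫ * ⟪y, z⟫ := by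
    simp only [inner_sub_left, inner_sub_right, real_inner_smul_left, real_inner_smul_right,
      hyy, hc1]
    ring
  have h2 : ‖x - ⟪x, y⟫ • y‖ ^ 2 = ‖x‖ ^ 2 - ⟪x, y⟫ ^ 2 := by
    rw [← real_inner_self_eq_norm_sq, ← real_inner_self_eq_norm_sq]
    simp only [inner_sub_left, inner_sub_right, real_inner_smul_left, real_inner_smul_right,
      hyy, hc1]
    ring
  have h3 : ‖z - ⟪y, z⟫ • y‖ ^ 2 = ‖z‖ ^ 2 - ⟪y, z⟫ ^ 2 := by
    rw [← real_inner_self_eq_norm_sq, ← real_inner_self_eq_norm_sq]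
    simp only [inner_sub_left, inner_sub_right, real_inner_smul_left, real_inner_smul_right,
      hyy, hc2]
    ring
  calc |⟪x, z⟫ - ⟪x, y⟫ * ⟪y, z⟫| = |⟪x - ⟪x, y⟫ • y, z - ⟪y, z⟫ • y⟫| := by rw [h1]
    _ ≤ ‖x - ⟪x, y⟫ • y‖ * ‖z - ⟪y, z⟫ • y‖ := abs_real_inner_le_norm _ _
    _ = Real.sqrt (‖x‖ ^ 2 - ⟪x, y⟫ ^ 2) * Real.sqrt (‖z‖ ^ 2 - ⟪y, z⟫ ^ 2) := by
        rw [← h2, ← h3, Real.sqrt_sq (norm_nonneg _), Real.sqrt_sq (norm_nonneg _)]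

lemma sin_angle_unit {y : V} (hy : ‖y‖ = 1) {x : V} (hx : x ≠ 0) :
    Real.sin (angle x y) = Real.sqrt (‖x‖ ^ 2 - ⟪x, y⟫ ^ 2) / ‖x‖ := by
  have hxn : (0 : ℝ) < ‖x‖ := norm_pos_iff.mpr hx
  have h := sin_angle_mul_norm_mul_norm x y
  rw [hy, mul_one, real_inner_self_eq_norm_sq, real_inner_self_eq_norm_sq, hy] at h
  have he : ‖x‖ ^ 2 * 1 ^ 2 - ⟪x, y⟫ * ⟪x, y⟫ = ‖x‖ ^ 2 - ⟪x, y⟫ ^ 2 := by ring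
  rw [he] at h
  rw [eq_div_iff hxn.ne', h]

lemma cos_angle_unit {y : V} (hy : ‖y‖ = 1) (x : V) :
    Real.cos (angle x y) = ⟪x, y⟫ / ‖x‖ := by
  rw [cos_angle, hy, mul_one]

lemma angle_triangle_unit {y : V} (hy : ‖y‖ = 1) {x z : V} (hx : x ≠ 0) (hz : z ≠ 0) :
    angle x z ≤ angle x y + angle y z := by
  by_cases hs : π < angle x y + angle y z
  · exact (angle_le_pi x z).trans hs.le
  push_neg at hs
  have hxn : (0 : ℝ) < ‖x‖ := norm_pos_iff.mpr hx
  have hzn : (0 : ℝ) < ‖z‖ := norm_pos_iff.mpr hz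
  have hcos : Real.cos (angle x y + angle y z) ≤ Real.cos (angle x z) := by
    rw [Real.cos_add, cos_angle_unit hy x, cos_angle (x := x) (y := z),
      sin_angle_unit hy hx, angle_comm y z, cos_angle_unit hy z, sin_angle_unit hy hz,
      ← real_inner_comm z y]
    have hk := (abs_le.mp (key_cs hy x z)).1
    rw [div_mul_div_comm, div_mul_div_comm, ← sub_div]
    gcongr
    linarith
  exact (Real.strictAntiOn_cos.le_iff_ge
    ⟨add_nonneg (angle_nonneg x y) (angle_nonneg y z), hs⟩
    ⟨angle_nonneg x z, angle_le_pi x z⟩).mp hcos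

open scoped RealInnerProductSpace

/-- The signed margin angle `φ(x,w) = π/2 − θ(x,w)` of a point `x` with respect to a
hyperplane with unit normal `w`. -/
noncomputable def phi {d : ℕ} (x w : EuclideanSpace ℝ (Fin d)) : ℝ :=
  Real.pi / 2 - InnerProductGeometry.angle x w

/-- If `u, v` are unit vectors with `θ(u,v) ≤ β` and `x ≠ 0` has margin `|φ(x,u)| > β`,
then `⟨u,x⟩` and `⟨v,x⟩` have the same (strict) sign and `|φ(x,v)| ≤ 2·|φ(x,u)|`. -/
theorem stmt_9 (d : ℕ) (u v x : EuclideanSpace ℝ (Fin d)) (β : ℝ) (hβ : 0 < β)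
    (hu : ‖u‖ = 1) (hv : ‖v‖ = 1) (hx : x ≠ 0)
    (hangle : InnerProductGeometry.angle u v ≤ β)
    (hmargin : β < |phi x u|) :
    0 < ⟪u, x⟫ * ⟪v, x⟫ ∧
    Real.sign ⟪u, x⟫ = Real.sign ⟪v, x⟫ ∧
    |phi x v| ≤ 2 * |phi x u| := by
  have hu0 : u ≠ 0 := fun h => by simp [h] at hu
  have hv0 : v ≠ 0 := fun h => by simp [h] at hv
  have hxn : (0 : ℝ) < ‖x‖ := norm_pos_iff.mpr hx
  have hπ := Real.pi_pos
  have t1 : angle x v ≤ angle x u + β := by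
    have := angle_triangle_unit hu hx hv0
    linarith
  have t2 : angle x u ≤ angle x v + β := by
    have := angle_triangle_unit hv hx hu0
    rw [angle_comm v u] at this
    linarith
  have hiu : ⟪u, x⟫ = Real.sin (phi x u) * ‖x‖ := by
    rw [phi, Real.sin_pi_div_two_sub, ← real_inner_comm u x,
      ← cos_angle_mul_norm_mul_norm x u, hu, mul_one]
  have hiv : ⟪v, x⟫ = Real.sin (phi x v) * ‖x‖ := by
    rw [phi, Real.sin_pi_div_two_sub, ← real_inner_comm v x,
      ← cos_angle_mul_norm_mul_norm x v, hv, mul_one]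
  have hAu1 := angle_nonneg x u
  have hAu2 := angle_le_pi x u
  have hAv1 := angle_nonneg x v
  have hAv2 := angle_le_pi x v
  have hφv1 : phi x u - β ≤ phi x v := by unfold phi; linarith
  have hφv2 : phi x v ≤ phi x u + β := by unfold phi; linarith
  by_cases hp : 0 < phi x u
  · rw [abs_of_pos hp] at hmargin
    have hpv : 0 < phi x v := by linarith
    have hsu : 0 < Real.sin (phi x u) :=
      Real.sin_pos_of_pos_of_lt_pi hp (by unfold phi at *; linarith)
    have hsv : 0 < Real.sin (phi x v) :=
      Real.sin_pos_of_pos_of_lt_pi hpv (by unfold phi at *; linarith)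
    have h1 : 0 < ⟪u, x⟫ := by rw [hiu]; exact mul_pos hsu hxn
    have h2 : 0 < ⟪v, x⟫ := by rw [hiv]; exact mul_pos hsv hxn
    exact ⟨mul_pos h1 h2, by rw [Real.sign_of_pos h1, Real.sign_of_pos h2],
      by rw [abs_of_pos hpv, abs_of_pos hp]; linarith⟩
  · push_neg at hp
    have hpneg : phi x u < 0 := by
      rcases hp.lt_or_eq with h | h
      · exact h
      · rw [h] at hmargin; simp at hmargin; linarith
    rw [abs_of_neg hpneg] at hmargin
    have hpv : phi x v < 0 := by linarith
    have hsu : Real.sin (phi x u) < 0 :=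
      Real.sin_neg_of_neg_of_neg_pi_lt hpneg (by unfold phi at *; linarith)
    have hsv : Real.sin (phi x v) < 0 :=
      Real.sin_neg_of_neg_of_neg_pi_lt hpv (by unfold phi at *; linarith)
    have h1 : ⟪u, x⟫ < 0 := by rw [hiu]; exact mul_neg_of_neg_of_pos hsu hxn
    have h2 : ⟪v, x⟫ < 0 := by rw [hiv]; exact mul_neg_of_neg_of_pos hsv hxn
    exact ⟨mul_pos_of_neg_of_neg h1 h2,
      by rw [Real.sign_of_neg h1, Real.sign_of_neg h2],
      by rw [abs_of_neg hpv, abs_of_neg hpneg]; linarith⟩
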